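/- Let G be a finite simple graph, π = {W_1,…,W_d} a vertex clique-partition of G, e_π a clique cluster-partition based on π, and G^{md} any multiple clique cluster-whiskered graph built from this data. Then every vertex of G is a shedding vertex of G^{md}; more precisely, for every vertex v ∈ W_i of G and every a ∈ A_i, and for every independent set S of the induced subgraph G^{md} \ N_{G^{md}}[v], the set S ∪ {a} is an independent set of the induced subgraph G^{md} \ v. -/
import Mathlib


namespace Paper

variable {V : Type*}

/-- `S` is an independent vertex set of the graph `H` (equivalently, of any induced
subgraph of `H` containing `S`): its vertices are pairwise non-adjacent. -/
def IndepOn (H : SimpleGraph V) (S : Set V) : Prop :=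
  ∀ x ∈ S, ∀ y ∈ S, ¬ H.Adj x y

/-- `S` is a maximal independent vertex set of the graph `H`. -/
def MaxIndep (H : SimpleGraph V) (S : Set V) : Prop :=
  IndepOn H S ∧ ∀ T : Set V, IndepOn H T → S ⊆ T → T = S

/-- The data exhibiting `H`, restricted to the vertex set `T`, as a multiple clique
cluster-whiskered graph `G^{md}` of type `(d, r)` over the base graph `G` (the induced
subgraph of `H` on `Vg`), built from a vertex clique-partition `π = {W_1, …, W_d}`,
a clique cluster-partition `e_π = {U_1, …, U_s}` based on `π`, and added vertex sets
`A_1, …, A_d`, `B_1, …, B_r` carrying arbitrary internal edges. -/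
structure MccWhiskered (H : SimpleGraph V) (T : Set V) (d s r : ℕ) where
  hrs : r ≤ s
  /-- the vertex set of the base graph `G`; the edges of `G` are the edges of `H`
  between vertices of `Vg`, i.e. `G` is the induced subgraph of `H` on `Vg`. -/
  Vg : Set V
  /-- the vertex clique-partition `π = {W_1, …, W_d}` of `G` -/
  W : Fin d → Set V
  /-- the clique cluster-partition `e_π = {U_1, …, U_s}` based on `π` -/
  U : Fin s → Set V
  W_ne : ∀ i, (W i).Nonempty
  W_sub : ∀ i, W i ⊆ Vg
  W_disj : ∀ i j, i ≠ j → Disjoint (W i) (W j)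
  W_cover : Vg ⊆ ⋃ i, W i
  W_clique : ∀ i, ∀ x ∈ W i, ∀ y ∈ W i, x ≠ y → H.Adj x y
  U_ne : ∀ j, (U j).Nonempty
  U_sub : ∀ j, U j ⊆ Vg
  U_disj : ∀ j k, j ≠ k → Disjoint (U j) (U k)
  U_cover : Vg ⊆ ⋃ j, U j
  /-- each clique of `π` is contained in some cluster -/
  W_in_U : ∀ i, ∃ j, W i ⊆ U j
  /-- two distinct cliques of `π` lying in a common cluster have no edge between them -/
  cluster_indep : ∀ i i', i ≠ i' → ∀ j, W i ⊆ U j → W i' ⊆ U j →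
    ∀ x ∈ W i, ∀ y ∈ W i', ¬ H.Adj x y
  /-- the first `r` clusters are unions of at least two cliques of `π` -/
  U_multi : ∀ j : Fin r, ∃ i i' : Fin d, i ≠ i' ∧
    W i ⊆ U (Fin.castLE hrs j) ∧ W i' ⊆ U (Fin.castLE hrs j)
  /-- the remaining `s - r` clusters each coincide with a single clique of `π` -/
  U_single : ∀ j : Fin s, r ≤ (j : ℕ) → ∃ i, U j = W i
  /-- the added whisker sets `A_1, …, A_d` -/
  A : Fin d → Set V
  /-- the added whisker sets `B_1, …, B_r` -/
  B : Fin r → Set V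
  A_ne : ∀ i, (A i).Nonempty
  B_ne : ∀ j, (B j).Nonempty
  A_disj_Vg : ∀ i, Disjoint (A i) Vg
  B_disj_Vg : ∀ j, Disjoint (B j) Vg
  A_disj : ∀ i i', i ≠ i' → Disjoint (A i) (A i')
  B_disj : ∀ j j', j ≠ j' → Disjoint (B j) (B j')
  AB_disj : ∀ i j, Disjoint (A i) (B j)
  /-- the vertex set of `G^{md}` -/
  total : T = Vg ∪ (⋃ i, A i) ∪ (⋃ j, B j)
  /-- each vertex of `A i` is adjacent to every vertex of `W i` -/
  A_adj : ∀ i, ∀ a ∈ A i, ∀ w ∈ W i, H.Adj a w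
  /-- each vertex of `B j` is adjacent to every vertex of `U j` -/
  B_adj : ∀ j, ∀ b ∈ B j, ∀ u ∈ U (Fin.castLE hrs j), H.Adj b u
  /-- besides the edges of `G`, the whisker edges, and edges inside the sets
  `A i` and `B j`, there are no other edges in `G^{md}` -/
  no_other_edges : ∀ x ∈ T, ∀ y ∈ T, H.Adj x y →
    (x ∈ Vg ∧ y ∈ Vg) ∨
    (∃ i, (x ∈ A i ∧ y ∈ W i) ∨ (y ∈ A i ∧ x ∈ W i) ∨ (x ∈ A i ∧ y ∈ A i)) ∨
    (∃ j, (x ∈ B j ∧ y ∈ U (Fin.castLE hrs j)) ∨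
          (y ∈ B j ∧ x ∈ U (Fin.castLE hrs j)) ∨ (x ∈ B j ∧ y ∈ B j))

/-- **Theorem.** Every vertex of `G` is a shedding vertex of `G^{md}`: for every vertex
`v ∈ W i` of `G` and every `a ∈ A i`, and for every independent set `S` of the induced
subgraph `G^{md} \ N_{G^{md}}[v]`, the set `S ∪ {a}` is an independent set of the
induced subgraph `G^{md} \ v`. -/
theorem mccWhiskered_shedding [Fintype V]
    (H : SimpleGraph V) (d s r : ℕ) (M : MccWhiskered H Set.univ d s r)
    (i : Fin d) (v : V) (hv : v ∈ M.W i) (a : V) (ha : a ∈ M.A i)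
    (S : Set V) (hS : S ⊆ {y | y ≠ v ∧ ¬ H.Adj v y}) (hSind : IndepOn H S) :
    (∀ x ∈ S ∪ {a}, x ≠ v) ∧ IndepOn H (S ∪ {a}) := by
  have haVg : a ∉ M.Vg := fun h => (M.A_disj_Vg i).ne_of_mem ha h rfl
  have hvVg : v ∈ M.Vg := M.W_sub i hv
  have hav : a ≠ v := fun h => haVg (h ▸ hvVg)
  -- key: no x ∈ S is adjacent to a
  have key : ∀ x ∈ S, ¬ H.Adj x a := by
    intro x hx hadj
    obtain ⟨hxv, hxnadj⟩ := hS hx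
    rcases M.no_other_edges x (Set.mem_univ x) a (Set.mem_univ a) hadj with
      ⟨_, h⟩ | ⟨i', h | h | h⟩ | ⟨j, h | h | h⟩
    · exact haVg h
    · exact haVg (M.W_sub i' h.2)
    · have hii : i' = i := by
        by_contra hne
        exact (M.A_disj i' i hne).ne_of_mem h.1 ha rfl
      have hxW : x ∈ M.W i := hii ▸ h.2
      exact hxnadj (M.W_clique i v hv x hxW (Ne.symm hxv))
    · have hii : i' = i := by
        by_contra hne
        exact (M.A_disj i' i hne).ne_of_mem h.2 ha rfl
      have hxA : x ∈ M.A i := hii ▸ h.1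
      exact hxnadj ((M.A_adj i x hxA v hv).symm)
    · exact haVg (M.U_sub _ h.2)
    · exact (M.AB_disj i j).ne_of_mem ha h.1 rfl
    · exact (M.AB_disj i j).ne_of_mem ha h.2 rfl
  constructor
  · rintro x (hx | rfl)
    · exact (hS hx).1
    · exact hav
  · rintro x (hx | rfl) y (hy | rfl)
    · exact hSind x hx y hy
    · exact key x hx
    · intro h; exact key y hy h.symm
    · exact fun h => H.irrefl h


end Paper
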